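/- For any finite symmetric group S_n with n ≥ 4 and any complex irreducible character χ of S_n, if χ vanishes on the conjugacy class of 3-cycles and on the conjugacy class of products of two disjoint transpositions, then n(n-1)/2 is a perfect square. -/

import Mathlib

open Equiv Finset CategoryTheory

lemma myClassify {α : Type*} [Fintype α] [DecidableEq α] {σ : Equiv.Perm α}
    (h1 : σ ≠ 1) (h4 : σ.support.card ≤ 4) (hs : Equiv.Perm.sign σ = 1) :
    σ.cycleType = {3} ∨ σ.cycleType = {2, 2} := by
  have hsum : σ.cycleType.sum ≤ 4 := by rw [Equiv.Perm.sum_cycleType]; exact h4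
  have h2 : ∀ a ∈ σ.cycleType, 2 ≤ a := fun a ha => Equiv.Perm.two_le_of_mem_cycleType ha
  have hc0 : σ.cycleType ≠ 0 := by simpa [Equiv.Perm.cycleType_eq_zero] using h1
  have heven : Even (σ.cycleType.sum + Multiset.card σ.cycleType) := by
    rw [Equiv.Perm.sign_of_cycleType] at hs
    by_contra hodd
    rw [Nat.not_even_iff_odd] at hodd
    rw [Odd.neg_one_pow hodd] at hs
    exact (by decide : (-1 : ℤˣ) ≠ 1) hs
  have hcard2 : Multiset.card σ.cycleType • 2 ≤ σ.cycleType.sum :=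
    Multiset.card_nsmul_le_sum h2
  rw [smul_eq_mul] at hcard2
  have hcpos : 0 < Multiset.card σ.cycleType := Multiset.card_pos.2 hc0
  have hcc : Multiset.card σ.cycleType = 1 ∨ Multiset.card σ.cycleType = 2 := by omega
  rcases hcc with hcc | hcc
  · obtain ⟨a, ha⟩ := Multiset.card_eq_one.mp hcc
    left
    have hmem : a ∈ σ.cycleType := by rw [ha]; exact Multiset.mem_singleton_self a
    have h2a := h2 a hmem
    rw [ha] at hsum heven ⊢
    rw [Multiset.sum_singleton] at hsum heven
    simp only [Multiset.card_singleton] at heven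
    obtain ⟨r, hr⟩ := heven
    have : a = 3 := by omega
    rw [this]
  · obtain ⟨a, b, hab⟩ := Multiset.card_eq_two.mp hcc
    right
    have hmema : a ∈ σ.cycleType := by rw [hab]; simp
    have hmemb : b ∈ σ.cycleType := by rw [hab]; simp
    have h2a := h2 a hmema
    have h2b := h2 b hmemb
    rw [hab] at hsum ⊢
    have hsum' : a + b ≤ 4 := by simpa using hsum
    have : a = 2 ∧ b = 2 := by omega
    rw [this.1, this.2]

lemma myEqOfSupportEq {α : Type*} [Fintype α] [DecidableEq α] {f g : Equiv.Perm α}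
    (hf : f.support.card = 2) (h : f.support = g.support) : f = g := by
  ext x
  by_cases hx : x ∈ f.support
  · have hfx : f x ∈ f.support := Equiv.Perm.apply_mem_support.2 hx
    have hgx' : g x ∈ g.support := Equiv.Perm.apply_mem_support.2 (h ▸ hx)
    have hgx : g x ∈ f.support := h ▸ hgx'
    have hfxne : f x ≠ x := Equiv.Perm.mem_support.1 hx
    have hgxne : g x ≠ x := Equiv.Perm.mem_support.1 (h ▸ hx)
    have hsub : ({x, f x} : Finset α) ⊆ f.support := by
      intro y hy
      rcases Finset.mem_insert.1 hy with rfl | hy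
      · exact hx
      · rwa [Finset.mem_singleton.1 hy]
    have hcard : ({x, f x} : Finset α).card = 2 := by
      rw [Finset.card_insert_of_notMem (by simpa using hfxne.symm), Finset.card_singleton]
    have hEq : ({x, f x} : Finset α) = f.support :=
      Finset.eq_of_subset_of_card_le hsub (by rw [hcard, hf])
    have : g x ∈ ({x, f x} : Finset α) := hEq ▸ hgx
    rcases Finset.mem_insert.1 this with h' | h'
    · exact absurd h' hgxne
    · exact (Finset.mem_singleton.1 h').symm
  · rw [Equiv.Perm.notMem_support.1 hx, Equiv.Perm.notMem_support.1 (h ▸ hx : x ∉ g.support)]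

lemma myCardTransp (n : ℕ) :
    2 * ((Finset.univ : Finset (Equiv.Perm (Fin n))).filter
      fun g => g.cycleType = {2}).card = n * (n - 1) := by
  have hsupp2 : ∀ g : Equiv.Perm (Fin n), g.cycleType = {2} → g.support.card = 2 := by
    intro g hg
    have := Equiv.Perm.sum_cycleType g
    rw [hg] at this
    simpa using this.symm
  have hcard : ((Finset.univ : Finset (Equiv.Perm (Fin n))).filter
      fun g => g.cycleType = {2}).card = ((Finset.univ : Finset (Fin n)).powersetCard 2).card := by
    apply Finset.card_bij (fun g _ => g.support)
    · intro g hg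
      rw [Finset.mem_powersetCard]
      exact ⟨Finset.subset_univ _, hsupp2 g (Finset.mem_filter.1 hg).2⟩
    · intro g₁ h₁ g₂ h₂ hEq
      exact myEqOfSupportEq (hsupp2 g₁ (Finset.mem_filter.1 h₁).2) hEq
    · intro S hS
      rw [Finset.mem_powersetCard] at hS
      obtain ⟨a, b, hab, hS2⟩ := Finset.card_eq_two.1 hS.2
      refine ⟨Equiv.swap a b, ?_, ?_⟩
      · refine Finset.mem_filter.2 ⟨Finset.mem_univ _, ?_⟩
        rw [(Equiv.Perm.isCycle_swap hab).cycleType, Equiv.Perm.card_support_swap hab]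
      · rw [Equiv.Perm.support_swap hab, hS2]
  rw [hcard, Finset.card_powersetCard, Finset.card_univ, Fintype.card_fin, Nat.choose_two_right]
  rcases n with _ | m
  · rfl
  · have : Even ((m + 1) * m) := by
      simpa [mul_comm] using Nat.even_mul_succ_self m
    obtain ⟨r, hr⟩ := this
    simp only [Nat.add_sub_cancel]
    omega

/-- If `n ≥ 4` and a complex irreducible character of `S_n` vanishes on the class of
3-cycles and on the class of double transpositions, then `n(n-1)/2` is a perfect square. -/
theorem stmt1 (n : ℕ) (hn : 4 ≤ n) (V : FDRep ℂ (Equiv.Perm (Fin n)))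
    [CategoryTheory.Simple V]
    (h3 : ∀ g : Equiv.Perm (Fin n), g.cycleType = {3} → V.character g = 0)
    (h22 : ∀ g : Equiv.Perm (Fin n), g.cycleType = {2, 2} → V.character g = 0) :
    ∃ m : ℕ, n * (n - 1) = 2 * m ^ 2 := by
  classical
  set K : Finset (Equiv.Perm (Fin n)) :=
    Finset.univ.filter (fun g => g.cycleType = {2}) with hK
  have hsupp2 : ∀ g ∈ K, g.support.card = 2 := by
    intro g hg
    have hg2 : g.cycleType = {2} := (Finset.mem_filter.1 hg).2
    have := Equiv.Perm.sum_cycleType g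
    rw [hg2] at this
    simpa using this.symm
  have hsign : ∀ g ∈ K, Equiv.Perm.sign g = -1 := by
    intro g hg
    have hg2 : g.cycleType = {2} := (Finset.mem_filter.1 hg).2
    rw [Equiv.Perm.sign_of_cycleType, hg2]
    decide
  -- the fixed transposition
  set t : Equiv.Perm (Fin n) := Equiv.swap ⟨0, by omega⟩ ⟨1, by omega⟩ with htdef
  have h01 : (⟨0, by omega⟩ : Fin n) ≠ ⟨1, by omega⟩ := by
    simp [Fin.ext_iff]
  have ht : t.cycleType = {2} := by
    rw [htdef, (Equiv.Perm.isCycle_swap h01).cycleType, Equiv.Perm.card_support_swap h01]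
  have hKt : t ∈ K := Finset.mem_filter.2 ⟨Finset.mem_univ _, ht⟩
  have htt : t * t = 1 := Equiv.swap_mul_self _ _
  -- dimension
  set d : ℕ := Module.finrank ℂ V with hd
  have hd0 : d ≠ 0 := by
    intro h0
    have hsub : Subsingleton V := by
      rw [hd] at h0
      exact Module.finrank_zero_iff.mp h0
    exact CategoryTheory.id_nonzero V
      (Action.hom_ext _ _ (FGModuleCat.hom_ext <| LinearMap.ext fun x => @Subsingleton.elim _ hsub _ _))
  -- character value at t is an integer
  have hf2 : V.ρ t * V.ρ t = 1 := by rw [← map_mul, htt, map_one]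
  obtain ⟨r, hr⟩ : ∃ r : ℕ, (d : ℂ) + V.character t = 2 * r := by
    set p : V →ₗ[ℂ] V := (2⁻¹ : ℂ) • (1 + V.ρ t) with hp
    have hfx : ∀ x : V, V.ρ t (V.ρ t x) = x := by
      intro x
      have := congrFun (congrArg DFunLike.coe hf2) x
      simpa using this
    have hidem : p ∘ₗ p = p := by
      ext x
      simp only [hp, LinearMap.comp_apply, LinearMap.smul_apply, LinearMap.add_apply,
        Module.End.one_apply, map_add, map_smul, hfx, smul_add]
      module
    obtain ⟨W, hW⟩ : ∃ W, LinearMap.IsProj W p := ⟨_, (LinearMap.isProj_range_iff_isIdempotentElem p).mpr hidem⟩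
    refine ⟨Module.finrank ℂ W, ?_⟩
    have htr : LinearMap.trace ℂ V p = (Module.finrank ℂ W : ℂ) := hW.trace
    have : LinearMap.trace ℂ V ((2⁻¹ : ℂ) • (1 + V.ρ t)) = (Module.finrank ℂ W : ℂ) := htr
    rw [map_smul, map_add, LinearMap.trace_one] at this
    have hchar : V.character t = LinearMap.trace ℂ V (V.ρ t) := rfl
    rw [smul_eq_mul] at this
    rw [hchar, hd]
    linear_combination (2 : ℂ) * this
  -- the class-sum morphism
  set Tlin : V →ₗ[ℂ] V := ∑ g ∈ K, V.ρ g with hTlin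
  have hcomm : ∀ h : Equiv.Perm (Fin n), V.ρ h * Tlin = Tlin * V.ρ h := by
    intro h
    rw [hTlin, Finset.mul_sum, Finset.sum_mul]
    refine Finset.sum_nbij' (fun g => h * g * h⁻¹) (fun g => h⁻¹ * g * h) ?_ ?_ ?_ ?_ ?_
    · intro g hg
      simp only [hK, Finset.mem_filter, Finset.mem_univ, true_and] at hg ⊢
      rw [← hg]
      exact Equiv.Perm.cycleType_conj
    · intro g hg
      simp only [hK, Finset.mem_filter, Finset.mem_univ, true_and] at hg ⊢
      rw [← hg]
      have := Equiv.Perm.cycleType_conj (σ := g) (τ := h⁻¹)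
      simpa using this
    · intro g _; group
    · intro g _; group
    · intro g _
      rw [← map_mul, ← map_mul]
      congr 1
      group
  let T : V ⟶ V := ⟨FGModuleCat.ofHom Tlin, fun h => FGModuleCat.hom_ext (hcomm h).symm⟩
  obtain ⟨c, hc⟩ := CategoryTheory.endomorphism_simple_eq_smul_id (𝕜 := ℂ) T
  have hchom : (c • LinearMap.id : V →ₗ[ℂ] V) = Tlin := by
    have := congrArg (fun f => f.hom.hom) (congrArg Action.Hom.hom hc)
    exact this
  -- characters are constant on K
  have hconst : ∀ g ∈ K, V.character g = V.character t := by
    intro g hg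
    have hg2 : g.cycleType = {2} := (Finset.mem_filter.1 hg).2
    obtain ⟨u, hu⟩ := isConj_iff.1 (Equiv.Perm.isConj_of_cycleType_eq (hg2.trans ht.symm))
    rw [← hu, FDRep.char_conj]
  -- Equation B : c * d = K.card * χ(t)
  have htrB : c * d = (K.card : ℂ) * V.character t := by
    have h1 : LinearMap.trace ℂ V Tlin = c * d := by
      rw [← hchom, map_smul, LinearMap.trace_id, smul_eq_mul, hd]
    have h2 : LinearMap.trace ℂ V Tlin = (K.card : ℂ) * V.character t := by
      rw [hTlin, map_sum]
      calc ∑ g ∈ K, LinearMap.trace ℂ V (V.ρ g) = ∑ _g ∈ K, V.character t :=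
            Finset.sum_congr rfl fun g hg => hconst g hg
        _ = (K.card : ℂ) * V.character t := by rw [Finset.sum_const, nsmul_eq_mul]
    rw [← h1, h2]
  -- key sum : ∑_{g ∈ K} χ(g t) = d
  have hsum : ∑ g ∈ K, V.character (g * t) = (d : ℂ) := by
    rw [Finset.sum_eq_single t]
    · rw [htt, FDRep.char_one, hd]
    · intro g hg hne
      have hgt1 : g * t ≠ 1 := by
        intro h1
        apply hne
        have : g = t⁻¹ := eq_inv_of_mul_eq_one_left h1
        rw [this, htdef, Equiv.swap_inv]
      have hsupp : (g * t).support.card ≤ 4 := by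
        calc (g * t).support.card ≤ (g.support ∪ t.support).card :=
              Finset.card_le_card (Equiv.Perm.support_mul_le g t)
          _ ≤ g.support.card + t.support.card := Finset.card_union_le _ _
          _ ≤ 4 := by rw [hsupp2 g hg, hsupp2 t hKt]
      have hsgn : Equiv.Perm.sign (g * t) = 1 := by
        rw [map_mul, hsign g hg, hsign t hKt]
        decide
      rcases myClassify hgt1 hsupp hsgn with h | h
      · exact h3 _ h
      · exact h22 _ h
    · intro h; exact absurd hKt h
  -- Equation A : c * χ(t) = d
  have htrA : c * V.character t = (d : ℂ) := by
    have h1 : LinearMap.trace ℂ V (Tlin * V.ρ t) = c * V.character t := by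
      rw [← hchom, smul_mul_assoc, map_smul, smul_eq_mul]
      congr 2
    have h2 : LinearMap.trace ℂ V (Tlin * V.ρ t) = ∑ g ∈ K, V.character (g * t) := by
      rw [hTlin, Finset.sum_mul, map_sum]
      refine Finset.sum_congr rfl fun g _ => ?_
      rw [← map_mul]
      rfl
    rw [← h1, h2, hsum]
  -- χ(t) ≠ 0 and the quadratic relation
  have hchart : V.character t ≠ 0 := by
    intro h0
    rw [h0, mul_zero] at htrA
    exact hd0 (by exact_mod_cast htrA.symm)
  have hquad : (K.card : ℂ) * V.character t ^ 2 = (d : ℂ) ^ 2 := by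
    linear_combination V.character t * htrB.symm + (d : ℂ) * htrA
  -- pass to integers
  set a : ℤ := 2 * r - d with ha
  have hcast : V.character t = (a : ℂ) := by
    push_cast [ha]
    linear_combination hr
  have hquadZ_aux : ((K.card : ℂ)) * (a : ℂ) ^ 2 = ((d : ℂ)) ^ 2 := by
    rw [← hcast]; exact hquad
  have hquadZ : (K.card : ℤ) * a ^ 2 = (d : ℤ) ^ 2 := by
    have : ((K.card : ℤ) * a ^ 2 : ℂ) = ((d : ℤ) ^ 2 : ℂ) := by
      push_cast
      exact hquadZ_aux
    exact_mod_cast this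
  have ha0 : a ≠ 0 := by
    intro h0
    apply hchart
    rw [hcast, h0]
    simp
  set b : ℕ := a.natAbs with hb
  have hb0 : b ≠ 0 := Int.natAbs_ne_zero.2 ha0
  have hquadN : K.card * b ^ 2 = d ^ 2 := by
    have : ((K.card * b ^ 2 : ℕ) : ℤ) = ((d ^ 2 : ℕ) : ℤ) := by
      push_cast [hb]
      rw [sq_abs]
      exact hquadZ
    exact_mod_cast this
  have hdvd : b ∣ d := (Nat.pow_dvd_pow_iff two_ne_zero).1 ⟨K.card, by rw [← hquadN]; ring⟩
  obtain ⟨m, hm⟩ := hdvd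
  have hKm : K.card = m ^ 2 := by
    have hb2 : 0 < b ^ 2 := Nat.pos_of_ne_zero (pow_ne_zero 2 hb0)
    have : K.card * b ^ 2 = m ^ 2 * b ^ 2 := by
      rw [hquadN, hm]; ring
    exact Nat.eq_of_mul_eq_mul_right hb2 this
  refine ⟨m, ?_⟩
  have := myCardTransp n
  rw [← hK] at this
  omega
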